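/- Levees supported over distinct subspaces are linearly independent: let X be a real inner product space, let V₁, …, V_k ⊆ X be pairwise distinct finite-dimensional subspaces, and let g_i : V_i → ℂ be continuous functions vanishing at infinity. If Σ_{i=1}^k g_i(P_{V_i} y) = 0 for all y ∈ X, then g_i = 0 for every i. -/

import Mathlib

open Filter Topology
open scoped BoundedContinuousFunction InnerProductSpace

noncomputable section

/-- Auxiliary lemma: the statement for sums over an arbitrary finite set of indices, proved by
strong induction on the finset, peeling off a minimal subspace each time. -/
theorem levees_linearIndependent_aux {ι : Type*} {X : Type*} [NormedAddCommGroup X]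
    [InnerProductSpace ℝ X] (V : ι → Submodule ℝ X) [∀ i, FiniteDimensional ℝ (V i)]
    (g : ∀ i, V i → ℂ) :
    ∀ s : Finset ι, Set.InjOn V s →
      (∀ i ∈ s, Filter.Tendsto (g i) (cocompact _) (𝓝 0)) →
      (∀ y : X, ∑ i ∈ s, g i ((V i).orthogonalProjectionOnto y) = 0) →
      ∀ i ∈ s, g i = 0 := by
  intro s
  induction s using Finset.strongInduction with
  | _ s ih =>
    intro hV hz hsum i hi
    classical
    -- pick a minimal subspace among those indexed by `s`
    obtain ⟨i₀, hi₀, hmin'⟩ := Set.Finite.exists_minimalFor V (↑s) s.finite_toSet ⟨i, hi⟩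
    have hmin : ∀ j ∈ (↑s : Set ι), V j ≤ V i₀ → V i₀ = V j :=
      fun j hj h => le_antisymm (hmin' hj h) h
    -- first show `g i₀ = 0`
    have hg0 : g i₀ = 0 := by
      funext v
      -- find `w ∈ (V i₀)ᗮ` not orthogonal to any other `V j`, `j ∈ s.erase i₀`
      have hw : ∃ w : X, w ∈ (V i₀)ᗮ ∧
          ∀ j ∈ s.erase i₀, (V j).orthogonalProjectionOnto w ≠ 0 := by
        set M := (↥((V i₀)ᗮ)) with hM
        set W : {j // j ∈ s.erase i₀} → Submodule ℝ M :=
          fun j => ((V j.1)ᗮ).comap ((V i₀)ᗮ).subtype with hW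
        have hWne : ∀ j, W j ≠ ⊤ := by
          rintro ⟨j, hj⟩ htop
          have hj' := Finset.mem_erase.mp hj
          have hle : (V i₀)ᗮ ≤ (V j)ᗮ := by
            intro x hx
            have : (⟨x, hx⟩ : M) ∈ W ⟨j, hj⟩ := htop ▸ Submodule.mem_top
            exact this
          have hle' : V j ≤ V i₀ := by
            have := Submodule.orthogonal_le hle
            rwa [Submodule.orthogonal_orthogonal, Submodule.orthogonal_orthogonal] at this
          have : V i₀ = V j := hmin j (Finset.mem_of_mem_erase hj) hle'
          exact hj'.1 (hV (Finset.mem_of_mem_erase hj) hi₀ this.symm)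
        have hcover : ⋃ j, ((W j : Submodule ℝ M) : Set M) ≠ Set.univ := by
          intro hcov
          obtain ⟨j, hjtop⟩ := Subspace.exists_eq_top_of_iUnion_eq_univ hcov
          exact hWne j hjtop
        obtain ⟨w', hw'⟩ : ∃ w' : M, ∀ j, w' ∉ W j := by
          by_contra h
          push_neg at h
          apply hcover
          ext x
          simp only [Set.mem_iUnion, Set.mem_univ, iff_true, SetLike.mem_coe]
          obtain ⟨j, hj⟩ := h x
          exact ⟨j, hj⟩
        refine ⟨(w' : X), w'.2, ?_⟩
        intro j hj hproj
        have : (w' : X) ∈ (V j)ᗮ := Submodule.orthogonalProjectionOnto_eq_zero_iff.mp hproj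
        exact hw' ⟨j, hj⟩ this
      obtain ⟨w, hwmem, hwproj⟩ := hw
      -- consider `y t = v + t • w` and take `t → ∞`
      set F : ℝ → ℂ := fun t =>
        ∑ j ∈ s, g j ((V j).orthogonalProjectionOnto ((v : X) + t • w)) with hF
      have hF0 : ∀ t, F t = 0 := fun t => hsum _
      have hFsplit : ∀ t : ℝ, F t = g i₀ v +
          ∑ j ∈ s.erase i₀, g j ((V j).orthogonalProjectionOnto ((v : X) + t • w)) := by
        intro t
        show (∑ j ∈ s, g j ((V j).orthogonalProjectionOnto ((v : X) + t • w))) = _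
        rw [← Finset.add_sum_erase s _ hi₀]
        congr 2
        rw [map_add, Submodule.orthogonalProjectionOnto_mem_subspace_eq_self,
          map_smul,
          Submodule.orthogonalProjectionOnto_apply_of_mem_orthogonal hwmem]
        simp
      -- each term over `s.erase i₀` tends to zero
      have hterm : ∀ j ∈ s.erase i₀,
          Filter.Tendsto (fun t : ℝ => g j ((V j).orthogonalProjectionOnto ((v : X) + t • w)))
            atTop (𝓝 0) := by
        intro j hj
        have hb : (V j).orthogonalProjectionOnto w ≠ 0 := hwproj j hj
        have hbpos : (0 : ℝ) < ‖(V j).orthogonalProjectionOnto w‖ := by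
          exact norm_pos_iff.mpr hb
        set a : ↥(V j) := (V j).orthogonalProjectionOnto (v : X)
        set b : ↥(V j) := (V j).orthogonalProjectionOnto w
        have hrw : (fun t : ℝ => g j ((V j).orthogonalProjectionOnto ((v : X) + t • w))) =
            (g j) ∘ (fun t : ℝ => a + t • b) := by
          funext t
          simp [a, b, map_add, map_smul, Function.comp]
        rw [hrw]
        apply (hz j (Finset.mem_of_mem_erase hj)).comp
        rw [← Metric.cobounded_eq_cocompact, ← tendsto_norm_atTop_iff_cobounded]
        have hlow : ∀ᶠ t : ℝ in atTop, t * ‖b‖ - ‖a‖ ≤ ‖a + t • b‖ := by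
          filter_upwards [eventually_ge_atTop (0 : ℝ)] with t ht
          have h1 : ‖t • b‖ - ‖a‖ ≤ ‖a + t • b‖ := by
            have h0 := norm_le_add_norm_add (t • b) a
            have h0' : ‖a + t • b‖ = ‖t • b + a‖ := by rw [add_comm]
            linarith
          have h2 : ‖t • b‖ = t * ‖b‖ := by
            rw [norm_smul, Real.norm_of_nonneg ht]
          linarith
        refine tendsto_atTop_mono' _ hlow ?_
        have : Filter.Tendsto (fun t : ℝ => t * ‖b‖ - ‖a‖) atTop atTop := by
          apply Filter.tendsto_atTop_add_const_right
          exact Tendsto.atTop_mul_const hbpos tendsto_id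
        exact this
      -- conclude `g i₀ v = 0`
      have hFlim : Filter.Tendsto F atTop
          (𝓝 (g i₀ v + ∑ _c ∈ s.erase i₀, (0 : ℂ))) := by
        have := Filter.Tendsto.add (tendsto_const_nhds (x := g i₀ v))
          (tendsto_finset_sum (s.erase i₀) hterm)
        exact this.congr (fun t => (hFsplit t).symm)
      have hFlim0 : Filter.Tendsto F atTop (𝓝 0) := by
        have hFz : F = fun _ => (0 : ℂ) := funext hF0
        rw [hFz]
        exact tendsto_const_nhds
      have := tendsto_nhds_unique hFlim hFlim0
      simpa using this
    -- now peel off `i₀` and apply the induction hypothesis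
    by_cases hii : i = i₀
    · rw [hii]; exact hg0
    · have hsum' : ∀ y : X, ∑ j ∈ s.erase i₀, g j ((V j).orthogonalProjectionOnto y) = 0 := by
        intro y
        have := hsum y
        rw [← Finset.add_sum_erase s _ hi₀, hg0] at this
        simpa using this
      exact ih (s.erase i₀) (Finset.erase_ssubset hi₀)
        (hV.mono (by simp [Finset.coe_erase, Set.diff_subset]))
        (fun j hj => hz j (Finset.mem_of_mem_erase hj)) hsum' i
        (Finset.mem_erase.mpr ⟨hii, hi⟩)

/-- levees supported over pairwise distinct finite dimensional subspaces are
linearly independent: if `V₁, …, V_k ⊆ X` are pairwise distinct finite dimensional subspaces,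
`g_i ∈ C₀(V_i)`, and `Σ_{i=1}^k g_i(P_{V_i} y) = 0` for all `y ∈ X`, then every `g_i = 0`. -/
theorem levees_linearIndependent (X : Type*) [NormedAddCommGroup X] [InnerProductSpace ℝ X]
    (k : ℕ) (V : Fin k → Submodule ℝ X) [∀ i, FiniteDimensional ℝ (V i)]
    (hV : Function.Injective V)
    (g : ∀ i, V i → ℂ) (hc : ∀ i, Continuous (g i))
    (hz : ∀ i, Tendsto (g i) (cocompact _) (𝓝 0))
    (hsum : ∀ y : X, ∑ i, g i ((V i).orthogonalProjectionOnto y) = 0) :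
    ∀ i, g i = 0 := by
  intro i
  exact levees_linearIndependent_aux V g Finset.univ (hV.injOn)
    (fun i _ => hz i) hsum i (Finset.mem_univ i)
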